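/- arXiv:1711.04279 — 3 statements merged into one kernel-verified Lean document; each statement's English description precedes it below -/
import Mathlib

section
/- Suppose a measurable set E ⊆ ℝⁿ satisfies the observability inequality for the heat equation, i.e. for every T > 0 there is a constant C_obs(n,T,E) > 0 such that every solution u of the heat equation with initial datum in L²(ℝⁿ) satisfies ∫_{ℝⁿ} |u(T,x)|² dx ≤ C_obs ∫_0^T ∫_E |u(t,x)|² dx dt. Then E is γ-thick at scale L for some γ > 0 and L > 0. -/
open MeasureTheory Real Set

noncomputable section

/-- The solution of the heat equation `∂ₜu − Δu = 0` with initial datum `u₀`,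
given by convolution with the heat kernel. -/
def heatSol (n : ℕ) (u₀ : EuclideanSpace ℝ (Fin n) → ℝ) (t : ℝ)
    (x : EuclideanSpace ℝ (Fin n)) : ℝ :=
  ∫ y, (4 * π * t) ^ (-(n : ℝ) / 2) * Real.exp (-‖x - y‖ ^ 2 / (4 * t)) * u₀ y

/-- `E ⊆ ℝⁿ` is `γ`-thick at scale `L` : `|E ∩ (x + LQ)| ≥ γ Lⁿ` for every `x`,
where `Q` is the open unit cube centered at the origin. -/
def IsThick (n : ℕ) (E : Set (EuclideanSpace ℝ (Fin n))) (γ L : ℝ) : Prop :=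
  ∀ x : EuclideanSpace ℝ (Fin n),
    ENNReal.ofReal (γ * L ^ n) ≤ volume (E ∩ {y | ∀ i, |y i - x i| < L / 2})

lemma gauss_int (n : ℕ) {b : ℝ} (hb : 0 < b) :
    Integrable (fun v : EuclideanSpace ℝ (Fin n) => rexp (-b * ‖v‖ ^ 2)) volume := by
  have h := (GaussianFourier.integrable_cexp_neg_mul_sq_norm_add
    (b := (b : ℂ)) (by simpa using hb) 0 (0 : EuclideanSpace ℝ (Fin n))).norm
  refine h.congr (Filter.Eventually.of_forall fun v => ?_)
  simp [Complex.norm_exp, ← Complex.ofReal_pow, ← Complex.ofReal_mul,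
    ← Complex.ofReal_neg]

lemma gauss_val (n : ℕ) {b : ℝ} (hb : 0 < b) :
    ∫ v : EuclideanSpace ℝ (Fin n), rexp (-b * ‖v‖ ^ 2) = (π / b) ^ ((n : ℝ) / 2) := by
  rw [GaussianFourier.integral_rexp_neg_mul_sq_norm hb]
  norm_num [finrank_euclideanSpace_fin]

section
variable {n : ℕ} (c x : EuclideanSpace ℝ (Fin n)) {t : ℝ}

lemma key_sq (y : EuclideanSpace ℝ (Fin n)) :
    ‖x - c‖ ^ 2 / 2 ≤ ‖x - y‖ ^ 2 + ‖y - c‖ ^ 2 := by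
  have h1 : ‖x - c‖ ≤ ‖x - y‖ + ‖y - c‖ := by
    have := dist_triangle x y c
    simpa [dist_eq_norm] using this
  nlinarith [norm_nonneg (x - y), norm_nonneg (y - c), norm_nonneg (x - c),
    sq_nonneg (‖x - y‖ - ‖y - c‖)]

lemma heatSol_FG (ht : 0 < t) (ht' : t ≤ 1/8) (y : EuclideanSpace ℝ (Fin n)) :
    (4 * π * t) ^ (-(n : ℝ) / 2) * rexp (-‖x - y‖ ^ 2 / (4 * t)) * rexp (-‖y - c‖ ^ 2)
      ≤ ((4 * π * t) ^ (-(n : ℝ) / 2) * rexp (-‖x - c‖ ^ 2 / 2)) *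
          rexp (-(1 / (4 * t) - 1) * ‖x - y‖ ^ 2) := by
  have hC : (0:ℝ) < (4 * π * t) ^ (-(n : ℝ) / 2) :=
    Real.rpow_pos_of_pos (by positivity) _
  rw [mul_assoc ((4 * π * t) ^ (-(n : ℝ) / 2)), mul_assoc ((4 * π * t) ^ (-(n : ℝ) / 2)),
    ← Real.exp_add, ← Real.exp_add]
  refine mul_le_mul_of_nonneg_left (Real.exp_le_exp.mpr ?_) hC.le
  have hk := key_sq c x y
  have hap : -‖x - y‖ ^ 2 / (4 * t) = -(1 / (4 * t) * ‖x - y‖ ^ 2) := by ring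
  rw [hap]
  linarith [hk]

lemma heatSol_gauss_integrand_int (ht : 0 < t) (ht' : t ≤ 1/8) :
    Integrable (fun y : EuclideanSpace ℝ (Fin n) =>
      (4 * π * t) ^ (-(n : ℝ) / 2) * rexp (-‖x - y‖ ^ 2 / (4 * t)) * rexp (-‖y - c‖ ^ 2))
      volume := by
  have ha : 2 ≤ 1 / (4 * t) := by
    rw [le_div_iff₀ (by linarith)]; linarith
  have hG : Integrable (fun y : EuclideanSpace ℝ (Fin n) =>
      ((4 * π * t) ^ (-(n : ℝ) / 2) * rexp (-‖x - c‖ ^ 2 / 2)) *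
        rexp (-(1 / (4 * t) - 1) * ‖x - y‖ ^ 2)) volume :=
    ((gauss_int n (show (0:ℝ) < 1 / (4 * t) - 1 by linarith)).comp_sub_left x).const_mul _
  refine hG.mono' ?_ (Filter.Eventually.of_forall fun y => ?_)
  · apply Continuous.aestronglyMeasurable
    fun_prop
  · rw [Real.norm_of_nonneg (by positivity)]
    exact heatSol_FG c x ht ht' y

lemma heatSol_gauss_le (ht : 0 < t) (ht' : t ≤ 1/8) :
    heatSol n (fun y => rexp (-‖y - c‖ ^ 2)) t x ≤
      2 ^ ((n : ℝ) / 2) * rexp (-‖x - c‖ ^ 2 / 2) := by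
  have ha : 2 ≤ 1 / (4 * t) := by
    rw [le_div_iff₀ (by linarith)]; linarith
  have ham : (0:ℝ) < 1 / (4 * t) - 1 := by linarith
  have hGint : Integrable (fun y : EuclideanSpace ℝ (Fin n) =>
      rexp (-(1 / (4 * t) - 1) * ‖x - y‖ ^ 2)) volume :=
    (gauss_int n ham).comp_sub_left x
  have step1 : heatSol n (fun y => rexp (-‖y - c‖ ^ 2)) t x ≤
      ((4 * π * t) ^ (-(n : ℝ) / 2) * rexp (-‖x - c‖ ^ 2 / 2)) *
        ∫ y : EuclideanSpace ℝ (Fin n), rexp (-(1 / (4 * t) - 1) * ‖x - y‖ ^ 2) := by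
    rw [heatSol, ← integral_const_mul]
    exact integral_mono (heatSol_gauss_integrand_int c x ht ht') (hGint.const_mul _)
      (heatSol_FG c x ht ht')
  have step2 : ∫ y : EuclideanSpace ℝ (Fin n), rexp (-(1 / (4 * t) - 1) * ‖x - y‖ ^ 2)
      = (π / (1 / (4 * t) - 1)) ^ ((n : ℝ) / 2) := by
    rw [integral_sub_left_eq_self (fun v : EuclideanSpace ℝ (Fin n) =>
      rexp (-(1 / (4 * t) - 1) * ‖v‖ ^ 2)) volume x]
    exact gauss_val n ham
  rw [step2] at step1
  refine step1.trans ?_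
  rw [mul_comm ((4 * π * t) ^ (-(n : ℝ) / 2)) (rexp _), mul_assoc,
    mul_comm (2 ^ ((n : ℝ)/2)) (rexp _)]
  refine mul_le_mul_of_nonneg_left ?_ (Real.exp_nonneg _)
  have hdiv : (0:ℝ) ≤ π / (1 / (4 * t) - 1) := div_nonneg pi_pos.le ham.le
  have h1 : ((π / (1 / (4 * t) - 1)) / (4 * π * t)) ^ ((n : ℝ) / 2)
      = (4 * π * t) ^ (-(n : ℝ) / 2) * (π / (1 / (4 * t) - 1)) ^ ((n : ℝ) / 2) := by
    rw [Real.div_rpow hdiv (by positivity), neg_div, Real.rpow_neg (by positivity),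
      div_eq_mul_inv, mul_comm]
  rw [← h1]
  have h2 : (π / (1 / (4 * t) - 1)) / (4 * π * t) = 1 / (1 - 4 * t) := by
    have h4t : (4:ℝ) * t ≠ 0 := by positivity
    have h14 : (1:ℝ) - 4 * t ≠ 0 := by
      intro h; rw [le_div_iff₀ (by linarith)] at ha; nlinarith
    have hπ : π ≠ 0 := pi_ne_zero
    field_simp
  rw [h2]
  have h14 : (0:ℝ) < 1 - 4 * t := by
    rw [le_div_iff₀ (by linarith)] at ha; nlinarith
  refine Real.rpow_le_rpow (div_nonneg zero_le_one h14.le) ?_ (by positivity)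
  rw [div_le_iff₀ h14]
  nlinarith
end


section
variable {n : ℕ} (c x : EuclideanSpace ℝ (Fin n)) {t : ℝ}
-- nonneg
lemma heatSol_gauss_nonneg (ht : 0 < t) :
    0 ≤ heatSol n (fun y => rexp (-‖y - c‖ ^ 2)) t x := by
  refine integral_nonneg fun y => ?_
  have h4 : (0:ℝ) < 4 * π * t := by positivity
  positivity

-- positivity
lemma heatSol_gauss_pos (ht : 0 < t) (ht' : t ≤ 1/8) :
    0 < heatSol n (fun y => rexp (-‖y - c‖ ^ 2)) t x := by
  rw [heatSol]
  rw [integral_pos_iff_support_of_nonneg (fun y => by positivity)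
    (heatSol_gauss_integrand_int c x ht ht')]
  have hs : Function.support (fun y : EuclideanSpace ℝ (Fin n) =>
      (4 * π * t) ^ (-(n : ℝ) / 2) * rexp (-‖x - y‖ ^ 2 / (4 * t)) * rexp (-‖y - c‖ ^ 2))
      = univ := by
    ext y
    have hC : (0:ℝ) < (4 * π * t) ^ (-(n : ℝ) / 2) := Real.rpow_pos_of_pos (by positivity) _
    simp [Function.mem_support]
    positivity
  rw [hs]
  simpa using (Metric.measure_ball_pos volume (0 : EuclideanSpace ℝ (Fin n)) one_pos).trans_le
    (measure_mono (subset_univ _))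

-- continuity in x
lemma heatSol_gauss_cont (ht : 0 < t) :
    Continuous (fun x => heatSol n (fun y => rexp (-‖y - c‖ ^ 2)) t x) := by
  apply continuous_of_dominated (bound := fun y : EuclideanSpace ℝ (Fin n) =>
    (4 * π * t) ^ (-(n : ℝ) / 2) * rexp (-‖y - c‖ ^ 2))
  · intro x
    exact Continuous.aestronglyMeasurable (by fun_prop)
  · intro x
    refine Filter.Eventually.of_forall fun y => ?_
    have hC : (0:ℝ) < (4 * π * t) ^ (-(n : ℝ) / 2) := Real.rpow_pos_of_pos (by positivity) _
    rw [Real.norm_of_nonneg (by positivity)]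
    have h1 : rexp (-‖x - y‖ ^ 2 / (4 * t)) ≤ 1 := by
      rw [Real.exp_le_one_iff, neg_div, neg_nonpos]
      positivity
    calc (4 * π * t) ^ (-(n : ℝ) / 2) * rexp (-‖x - y‖ ^ 2 / (4 * t)) *
          (fun y => rexp (-‖y - c‖ ^ 2)) y
        = ((4 * π * t) ^ (-(n : ℝ) / 2) * rexp (-‖y - c‖ ^ 2)) *
            rexp (-‖x - y‖ ^ 2 / (4 * t)) := by ring
      _ ≤ ((4 * π * t) ^ (-(n : ℝ) / 2) * rexp (-‖y - c‖ ^ 2)) * 1 := by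
          refine mul_le_mul_of_nonneg_left h1 (by positivity)
      _ = (4 * π * t) ^ (-(n : ℝ) / 2) * rexp (-‖y - c‖ ^ 2) := mul_one _
  · have hb : Integrable (fun y : EuclideanSpace ℝ (Fin n) => rexp (-1 * ‖y - c‖ ^ 2)) volume :=
      (gauss_int n one_pos).comp_sub_right c
    have hb' : Integrable (fun y : EuclideanSpace ℝ (Fin n) => rexp (-‖y - c‖ ^ 2)) volume :=
      hb.congr (Filter.Eventually.of_forall fun y => by norm_num)
    exact hb'.const_mul _
  · refine Filter.Eventually.of_forall fun y => ?_
    fun_prop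

-- translation invariance
lemma heatSol_gauss_translate (t : ℝ) :
    heatSol n (fun y => rexp (-‖y - c‖ ^ 2)) t x
      = heatSol n (fun y => rexp (-‖y - 0‖ ^ 2)) t (x - c) := by
  rw [heatSol, heatSol]
  have := integral_sub_right_eq_self (μ := (volume : Measure (EuclideanSpace ℝ (Fin n))))
    (fun y => (4 * π * t) ^ (-(n : ℝ) / 2) * rexp (-‖(x - c) - y‖ ^ 2 / (4 * t)) *
      rexp (-‖y - 0‖ ^ 2)) c
  rw [← this]
  congr 1
  funext y
  have h1 : x - c - (y - c) = x - y := by abel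
  have h2 : y - c - 0 = y - c := by abel
  rw [h1, h2]

-- L² membership
lemma gauss_memL2 : MemLp (fun y : EuclideanSpace ℝ (Fin n) => rexp (-‖y - c‖ ^ 2)) 2 volume := by
  rw [memLp_two_iff_integrable_sq (Continuous.aestronglyMeasurable (by fun_prop))]
  refine ((gauss_int n two_pos).comp_sub_right c).congr
    (Filter.Eventually.of_forall fun y => ?_)
  show rexp (-2 * ‖y - c‖ ^ 2) = rexp (-‖y - c‖ ^ 2) ^ 2
  have h : rexp (-‖y - c‖ ^ 2) ^ 2 = rexp (-‖y - c‖ ^ 2 + -‖y - c‖ ^ 2) := by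
    rw [Real.exp_add]; ring
  rw [h]
  congr 1
  ring

end


section Aux
variable {n : ℕ}

lemma gauss_int' {b : ℝ} (hb : 0 < b) (c : EuclideanSpace ℝ (Fin n)) :
    Integrable (fun y : EuclideanSpace ℝ (Fin n) => rexp (-b * ‖y - c‖ ^ 2)) volume :=
  (gauss_int n hb).comp_sub_right c

lemma rpow_half_sq : ((2:ℝ) ^ ((n:ℝ)/2)) ^ 2 = 2 ^ (n:ℝ) := by
  rw [← Real.rpow_natCast ((2:ℝ) ^ ((n:ℝ)/2)) 2, ← Real.rpow_mul (by norm_num : (0:ℝ) ≤ 2)]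
  norm_num

lemma exp_half_sq (s : ℝ) : rexp (-s/2) ^ 2 = rexp (-s) := by
  have h : rexp (-s/2) ^ 2 = rexp (-s/2 + -s/2) := by rw [Real.exp_add]; ring
  rw [h]; congr 1; ring

lemma heatSol_sq_le (c x : EuclideanSpace ℝ (Fin n)) {t : ℝ} (ht : 0 < t) (ht' : t ≤ 1/8) :
    heatSol n (fun y => rexp (-‖y - c‖ ^ 2)) t x ^ 2 ≤ 2 ^ (n:ℝ) * rexp (-‖x - c‖ ^ 2) := by
  have h1 := heatSol_gauss_le c x ht ht'
  have h0 := heatSol_gauss_nonneg c x ht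
  calc heatSol n (fun y => rexp (-‖y - c‖ ^ 2)) t x ^ 2
      ≤ (2 ^ ((n:ℝ)/2) * rexp (-‖x - c‖ ^ 2 / 2)) ^ 2 := by
        exact pow_le_pow_left₀ h0 h1 2
    _ = 2 ^ (n:ℝ) * rexp (-‖x - c‖ ^ 2) := by
        rw [mul_pow, rpow_half_sq, exp_half_sq]

lemma q_int (c : EuclideanSpace ℝ (Fin n)) :
    Integrable (fun x : EuclideanSpace ℝ (Fin n) => 2 ^ (n:ℝ) * rexp (-‖x - c‖ ^ 2)) volume :=
  (((gauss_int' one_pos c).congr (Filter.Eventually.of_forall fun y => by norm_num)).const_mul _)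

lemma heatSol_sq_int (c : EuclideanSpace ℝ (Fin n)) {t : ℝ} (ht : 0 < t) (ht' : t ≤ 1/8) :
    Integrable (fun x => heatSol n (fun y => rexp (-‖y - c‖ ^ 2)) t x ^ 2) volume := by
  refine (q_int c).mono' (((heatSol_gauss_cont c ht).pow 2).aestronglyMeasurable)
    (Filter.Eventually.of_forall fun x => ?_)
  rw [Real.norm_of_nonneg (sq_nonneg _)]
  exact heatSol_sq_le c x ht ht'

end Aux

/-- If `E` satisfies the observability inequality for the heat equation then `E` is
`γ`-thick at scale `L` for some `γ > 0` and `L > 0`. -/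
theorem thick_of_observability (n : ℕ) (hn : 0 < n)
    (E : Set (EuclideanSpace ℝ (Fin n))) (hE : MeasurableSet E)
    (hobs : ∀ T > (0:ℝ), ∃ Cobs > (0:ℝ),
      ∀ u₀ : EuclideanSpace ℝ (Fin n) → ℝ, MemLp u₀ 2 volume →
        ∫ x, heatSol n u₀ T x ^ 2 ≤
          Cobs * ∫ t in Ioo (0:ℝ) T, ∫ x in E, heatSol n u₀ t x ^ 2) :
    ∃ γ > (0:ℝ), ∃ L > (0:ℝ), IsThick n E γ L := by
  obtain ⟨Cobs, hCobs, hineq⟩ := hobs (1/8) (by norm_num)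
  set cT : ℝ := ∫ x, heatSol n (fun y => rexp (-‖y - (0:EuclideanSpace ℝ (Fin n))‖ ^ 2)) (1/8) x ^ 2
    with hcT_def
  have ht8 : (0:ℝ) < 1/8 := by norm_num
  have ht8' : (1/8:ℝ) ≤ 1/8 := le_refl _
  -- positivity of cT
  have hcT_pos : 0 < cT := by
    rw [hcT_def, integral_pos_iff_support_of_nonneg (fun x => sq_nonneg _)
      (heatSol_sq_int 0 ht8 ht8')]
    have hs : Function.support (fun x =>
        heatSol n (fun y => rexp (-‖y - (0:EuclideanSpace ℝ (Fin n))‖ ^ 2)) (1/8) x ^ 2) = univ := by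
      ext x
      simp only [Function.mem_support, mem_univ, iff_true]
      exact pow_ne_zero 2 (ne_of_gt (heatSol_gauss_pos 0 x ht8 ht8'))
    rw [hs]
    simpa using (Metric.measure_ball_pos volume (0 : EuclideanSpace ℝ (Fin n)) one_pos).trans_le
      (measure_mono (subset_univ _))
  set A : ℝ := 2 ^ (n:ℝ) with hA_def
  have hApos : 0 < A := Real.rpow_pos_of_pos two_pos _
  set K : ℝ := (2 * π) ^ ((n:ℝ)/2) with hK_def
  have hKpos : 0 < K := Real.rpow_pos_of_pos (by positivity) _
  set P : ℝ := Cobs * (1/8) * (A * K) with hP_def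
  have hPpos : 0 < P := by positivity
  set R : ℝ := Real.sqrt (2 * max 1 (Real.log (2 * P / cT))) with hR_def
  have hRarg : (0:ℝ) < 2 * max 1 (Real.log (2 * P / cT)) := by
    have := le_max_left 1 (Real.log (2 * P / cT)); linarith
  have hRpos : 0 < R := Real.sqrt_pos.mpr hRarg
  have hR2 : R ^ 2 = 2 * max 1 (Real.log (2 * P / cT)) := Real.sq_sqrt hRarg.le
  have htail : P * rexp (-R ^ 2 / 2) ≤ cT / 2 := by
    have h1 : Real.log (2 * P / cT) ≤ R ^ 2 / 2 := by
      rw [hR2]; have := le_max_right 1 (Real.log (2 * P / cT)); linarith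
    have h2 : rexp (-R ^ 2 / 2) ≤ cT / (2 * P) := by
      have : rexp (-R ^ 2 / 2) ≤ rexp (-Real.log (2 * P / cT)) := by
        rw [Real.exp_le_exp]; linarith
      calc rexp (-R ^ 2 / 2) ≤ rexp (-Real.log (2 * P / cT)) := this
        _ = cT / (2 * P) := by
            rw [← Real.log_inv, Real.exp_log (by positivity)]
            rw [inv_div]
      
    calc P * rexp (-R ^ 2 / 2) ≤ P * (cT / (2 * P)) := by
          exact mul_le_mul_of_nonneg_left h2 hPpos.le
      _ = cT / 2 := by field_simp
  -- main estimate
  have hmain : ∀ c : EuclideanSpace ℝ (Fin n),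
      cT ≤ Cobs * (1/8) *
        (A * (volume (E ∩ Metric.ball c R)).toReal + A * rexp (-R ^ 2 / 2) * K) := by
    intro c
    set M : ℝ := A * (volume (E ∩ Metric.ball c R)).toReal + A * rexp (-R ^ 2 / 2) * K with hM_def
    have hMnn : 0 ≤ M := by positivity
    -- observability applied to translated gaussian
    have hLHS : (∫ x, heatSol n (fun y => rexp (-‖y - c‖ ^ 2)) (1/8) x ^ 2) = cT := by
      rw [hcT_def]
      have h1 : ∀ x : EuclideanSpace ℝ (Fin n),
          heatSol n (fun y => rexp (-‖y - c‖ ^ 2)) (1/8) x ^ 2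
            = heatSol n (fun y => rexp (-‖y - (0:EuclideanSpace ℝ (Fin n))‖ ^ 2)) (1/8) (x - c) ^ 2 :=
        fun x => by rw [heatSol_gauss_translate c x (1/8)]
      simp_rw [h1]
      exact integral_sub_right_eq_self
        (fun x => heatSol n (fun y => rexp (-‖y - (0:EuclideanSpace ℝ (Fin n))‖ ^ 2)) (1/8) x ^ 2) c
    have hob := hineq (fun y => rexp (-‖y - c‖ ^ 2)) (gauss_memL2 c)
    rw [hLHS] at hob
    -- bound the inner integral uniformly over t
    have hinner : ∀ t ∈ Ioo (0:ℝ) (1/8),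
        ‖∫ x in E, heatSol n (fun y => rexp (-‖y - c‖ ^ 2)) t x ^ 2‖ ≤ M := by
      intro t htt
      obtain ⟨ht0, ht1⟩ := htt
      have hcont := ((heatSol_gauss_cont c ht0).pow 2)
      have hqon : IntegrableOn (fun x : EuclideanSpace ℝ (Fin n) =>
          2 ^ (n:ℝ) * rexp (-‖x - c‖ ^ 2)) E volume := (q_int c).integrableOn
      have hsqon : IntegrableOn (fun x => heatSol n (fun y => rexp (-‖y - c‖ ^ 2)) t x ^ 2)
          E volume := by
        refine hqon.mono' hcont.aestronglyMeasurable.restrict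
          (Filter.Eventually.of_forall fun x => ?_)
        rw [Real.norm_of_nonneg (sq_nonneg _)]
        exact heatSol_sq_le c x ht0 ht1.le
      have hnn : 0 ≤ ∫ x in E, heatSol n (fun y => rexp (-‖y - c‖ ^ 2)) t x ^ 2 :=
        setIntegral_nonneg hE fun x _ => sq_nonneg _
      rw [Real.norm_of_nonneg hnn]
      have step1 : (∫ x in E, heatSol n (fun y => rexp (-‖y - c‖ ^ 2)) t x ^ 2)
          ≤ ∫ x in E, 2 ^ (n:ℝ) * rexp (-‖x - c‖ ^ 2) :=
        setIntegral_mono_on hsqon hqon hE (fun x _ => heatSol_sq_le c x ht0 ht1.le)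
      have hsplit : (∫ x in E ∩ Metric.ball c R, 2 ^ (n:ℝ) * rexp (-‖x - c‖ ^ 2))
            + (∫ x in E \ Metric.ball c R, 2 ^ (n:ℝ) * rexp (-‖x - c‖ ^ 2))
          = ∫ x in E, 2 ^ (n:ℝ) * rexp (-‖x - c‖ ^ 2) :=
        integral_inter_add_diff Metric.isOpen_ball.measurableSet hqon
      have hball : (∫ x in E ∩ Metric.ball c R, 2 ^ (n:ℝ) * rexp (-‖x - c‖ ^ 2))
          ≤ A * (volume (E ∩ Metric.ball c R)).toReal := by
        have hfin : volume (E ∩ Metric.ball c R) < ⊤ :=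
          (measure_mono inter_subset_right).trans_lt measure_ball_lt_top
        have := norm_setIntegral_le_of_norm_le_const hfin
          (f := fun x : EuclideanSpace ℝ (Fin n) => 2 ^ (n:ℝ) * rexp (-‖x - c‖ ^ 2)) (C := A)
          (fun x _ => by
            rw [Real.norm_of_nonneg (by positivity)]
            have h1 : rexp (-‖x - c‖ ^ 2) ≤ 1 := by
              rw [Real.exp_le_one_iff, neg_nonpos]; positivity
            calc 2 ^ (n:ℝ) * rexp (-‖x - c‖ ^ 2) ≤ 2 ^ (n:ℝ) * 1 :=
                  mul_le_mul_of_nonneg_left h1 (by positivity)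
              _ = A := by rw [mul_one, hA_def])
        calc (∫ x in E ∩ Metric.ball c R, 2 ^ (n:ℝ) * rexp (-‖x - c‖ ^ 2))
            ≤ ‖∫ x in E ∩ Metric.ball c R, 2 ^ (n:ℝ) * rexp (-‖x - c‖ ^ 2)‖ := le_norm_self _
          _ ≤ A * (volume (E ∩ Metric.ball c R)).toReal := this
      have htailint : (∫ x in E \ Metric.ball c R, 2 ^ (n:ℝ) * rexp (-‖x - c‖ ^ 2))
          ≤ A * rexp (-R ^ 2 / 2) * K := by
        have hsub : E \ Metric.ball c R ⊆ (Metric.ball c R)ᶜ := fun x hx => hx.2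
        have step_a : (∫ x in E \ Metric.ball c R, 2 ^ (n:ℝ) * rexp (-‖x - c‖ ^ 2))
            ≤ ∫ x in (Metric.ball c R)ᶜ, 2 ^ (n:ℝ) * rexp (-‖x - c‖ ^ 2) :=
          setIntegral_mono_set (q_int c).integrableOn
            (Filter.Eventually.of_forall fun x => by positivity)
            (HasSubset.Subset.eventuallyLE hsub)
        have hrint : Integrable (fun x : EuclideanSpace ℝ (Fin n) =>
            (A * rexp (-R ^ 2 / 2)) * rexp (-(1/2) * ‖x - c‖ ^ 2)) volume :=
          (gauss_int' (by norm_num) c).const_mul _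
        have step_b : (∫ x in (Metric.ball c R)ᶜ, 2 ^ (n:ℝ) * rexp (-‖x - c‖ ^ 2))
            ≤ ∫ x in (Metric.ball c R)ᶜ,
                (A * rexp (-R ^ 2 / 2)) * rexp (-(1/2) * ‖x - c‖ ^ 2) := by
          refine setIntegral_mono_on (q_int c).integrableOn hrint.integrableOn
            Metric.isOpen_ball.measurableSet.compl (fun x hx => ?_)
          have hxR : R ≤ ‖x - c‖ := by
            have := hx
            simp only [mem_compl_iff, Metric.mem_ball, not_lt, dist_eq_norm] at this
            exact this
          have hR2le : R ^ 2 ≤ ‖x - c‖ ^ 2 := pow_le_pow_left₀ hRpos.le hxR 2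
          rw [hA_def, mul_assoc, ← Real.exp_add]
          refine mul_le_mul_of_nonneg_left (Real.exp_le_exp.mpr ?_) (by positivity)
          linarith
        have step_c : (∫ x in (Metric.ball c R)ᶜ,
              (A * rexp (-R ^ 2 / 2)) * rexp (-(1/2) * ‖x - c‖ ^ 2))
            ≤ ∫ x, (A * rexp (-R ^ 2 / 2)) * rexp (-(1/2) * ‖x - c‖ ^ 2) :=
          setIntegral_le_integral hrint (Filter.Eventually.of_forall fun x => by positivity)
        have hval : (∫ x : EuclideanSpace ℝ (Fin n),
            (A * rexp (-R ^ 2 / 2)) * rexp (-(1/2) * ‖x - c‖ ^ 2))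
            = A * rexp (-R ^ 2 / 2) * K := by
          rw [integral_const_mul]
          congr 1
          have h1 : (∫ x : EuclideanSpace ℝ (Fin n), rexp (-(1/2) * ‖x - c‖ ^ 2))
              = ∫ x : EuclideanSpace ℝ (Fin n), rexp (-(1/2) * ‖x‖ ^ 2) :=
            integral_sub_right_eq_self
              (fun x : EuclideanSpace ℝ (Fin n) => rexp (-(1/2) * ‖x‖ ^ 2)) c
          rw [h1, gauss_val n (by norm_num : (0:ℝ) < 1/2), hK_def]
          congr 1
          ring
        linarith [step_a, step_b, step_c, hval.le, hval.ge]
      rw [hM_def]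
      linarith [step1, hsplit, hball, htailint]
    -- put together
    have houter : ‖∫ t in Ioo (0:ℝ) (1/8),
        ∫ x in E, heatSol n (fun y => rexp (-‖y - c‖ ^ 2)) t x ^ 2‖
        ≤ M * (volume (Ioo (0:ℝ) (1/8))).toReal :=
      norm_setIntegral_le_of_norm_le_const
        (by rw [Real.volume_Ioo]; exact ENNReal.ofReal_lt_top) hinner
    have hvolT : (volume (Ioo (0:ℝ) (1/8))).toReal = 1/8 := by
      rw [Real.volume_Ioo, ENNReal.toReal_ofReal (by norm_num)]
      norm_num
    rw [hvolT] at houter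
    calc cT ≤ Cobs * ∫ t in Ioo (0:ℝ) (1/8),
          ∫ x in E, heatSol n (fun y => rexp (-‖y - c‖ ^ 2)) t x ^ 2 := hob
      _ ≤ Cobs * (M * (1/8)) := by
          refine mul_le_mul_of_nonneg_left ?_ hCobs.le
          exact (le_norm_self _).trans houter
      _ = Cobs * (1/8) * M := by ring
  -- extract volume lower bound
  set δ : ℝ := cT / (2 * (Cobs * (1/8) * A)) with hδ_def
  have hδpos : 0 < δ := by positivity
  have hvol : ∀ c : EuclideanSpace ℝ (Fin n),
      δ ≤ (volume (E ∩ Metric.ball c R)).toReal := by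
    intro c
    have h1 := hmain c
    have h2 : Cobs * (1/8) * (A * rexp (-R ^ 2 / 2) * K) ≤ cT / 2 := by
      calc Cobs * (1/8) * (A * rexp (-R ^ 2 / 2) * K) = P * rexp (-R ^ 2 / 2) := by
            rw [hP_def]; ring
        _ ≤ cT / 2 := htail
    have h3 : cT / 2 ≤ Cobs * (1/8) * A * (volume (E ∩ Metric.ball c R)).toReal := by
      nlinarith [h1, h2]
    rw [hδ_def, div_le_iff₀ (by positivity)]
    nlinarith [h3]
  -- conclude thickness
  refine ⟨δ / (2 * R) ^ n, by positivity, 2 * R, by positivity, fun x₀ => ?_⟩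
  have hγL : δ / (2 * R) ^ n * (2 * R) ^ n = δ :=
    div_mul_cancel₀ δ (by positivity)
  rw [hγL]
  have hsub : Metric.ball x₀ R ⊆ {y : EuclideanSpace ℝ (Fin n) | ∀ i, |y i - x₀ i| < 2 * R / 2} := by
    intro y hy
    intro i
    have hdist : dist y x₀ < R := Metric.mem_ball.mp hy
    have hcoord : |y i - x₀ i| ≤ dist y x₀ := by
      rw [EuclideanSpace.dist_eq]
      have h1 : |y i - x₀ i| = Real.sqrt ((y i - x₀ i) ^ 2) := (Real.sqrt_sq_eq_abs _).symm
      rw [h1]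
      apply Real.sqrt_le_sqrt
      have h2 := Finset.single_le_sum (f := fun j => dist (y j) (x₀ j) ^ 2)
        (fun j _ => sq_nonneg _) (Finset.mem_univ i)
      simpa [Real.dist_eq] using h2
    have : 2 * R / 2 = R := by ring
    rw [this]
    exact lt_of_le_of_lt hcoord hdist
  calc ENNReal.ofReal δ ≤ volume (E ∩ Metric.ball x₀ R) :=
        ENNReal.ofReal_le_of_le_toReal (hvol x₀)
    _ ≤ volume (E ∩ {y : EuclideanSpace ℝ (Fin n) | ∀ i, |y i - x₀ i| < 2 * R / 2}) :=
        measure_mono (inter_subset_inter_right E hsub)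
end
end

section
/- Let a > 0 and 0 < ν ≤ 1. Then for every u₀ ∈ L²(e^{a|x|^ν}dx) and every t > 0, the heat semigroup satisfies ( ∫_{ℝⁿ} |(e^{tΔ}u₀)(x)|² e^{a|x|^ν} dx )^{1/2} ≤ 2^{n/2} e^{a^{2/(2−ν)} t^{ν/(2−ν)}} ( ∫_{ℝⁿ} |u₀(x)|² e^{a|x|^ν} dx )^{1/2}. -/
open MeasureTheory Real Set

noncomputable section

open scoped ENNReal NNReal

lemma aux_young {a ν t : ℝ} (ha : 0 < a) (hν₀ : 0 < ν) (hν₁ : ν ≤ 1) (ht : 0 < t)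
    {r : ℝ} (hr : 0 ≤ r) :
    a * r ^ ν / 2 ≤ r ^ 2 / (8 * t) + a ^ (2 / (2 - ν)) * t ^ (ν / (2 - ν)) := by
  have h2ν : 0 < 2 - ν := by linarith
  set β : ℝ := ν / (2 - ν) with hβ
  have hβ0 : 0 ≤ β := by positivity
  have hβ1 : β ≤ 1 := by rw [hβ, div_le_one h2ν]; linarith
  set lam : ℝ := (2 * a * ν * t)⁻¹ with hlam
  have hlam0 : 0 < lam := by positivity
  have hgm := Real.geom_mean_le_arith_mean2_weighted (w₁ := ν / 2) (w₂ := (2 - ν) / 2)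
    (p₁ := lam * r ^ 2) (p₂ := lam ^ (-β)) (by positivity) (by positivity) (by positivity)
    (by positivity) (by ring)
  have key : r ^ ν ≤ ν / 2 * (lam * r ^ 2) + (2 - ν) / 2 * lam ^ (-β) := by
    have h1 : (lam * r ^ 2) ^ (ν / 2) = lam ^ (ν / 2) * r ^ ν := by
      rw [Real.mul_rpow hlam0.le (by positivity), ← Real.rpow_natCast r 2,
        ← Real.rpow_mul hr, show ((2:ℕ):ℝ) * (ν / 2) = ν by push_cast; ring]
    have h2 : (lam ^ (-β)) ^ ((2 - ν) / 2) = lam ^ (-(ν / 2)) := by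
      rw [← Real.rpow_mul hlam0.le]
      congr 1
      rw [hβ]; field_simp
    have h3 : lam ^ (ν / 2) * r ^ ν * lam ^ (-(ν / 2)) = r ^ ν := by
      rw [mul_comm (lam ^ (ν/2)) (r^ν), mul_assoc, ← Real.rpow_add hlam0]
      simp
    calc r ^ ν = (lam * r ^ 2) ^ (ν / 2) * (lam ^ (-β)) ^ ((2 - ν) / 2) := by
          rw [h1, h2, h3]
      _ ≤ _ := hgm
  have key2 : a * r ^ ν / 2 ≤ r ^ 2 / (8 * t) + a / 2 * ((2 - ν) / 2) * lam ^ (-β) := by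
    have := mul_le_mul_of_nonneg_left key (by positivity : (0:ℝ) ≤ a / 2)
    have heq : a / 2 * (ν / 2 * (lam * r ^ 2)) = r ^ 2 / (8 * t) := by
      rw [hlam]; field_simp; ring
    calc a * r ^ ν / 2 = a / 2 * r ^ ν := by ring
      _ ≤ a / 2 * (ν / 2 * (lam * r ^ 2) + (2 - ν) / 2 * lam ^ (-β)) := this
      _ = r ^ 2 / (8 * t) + a / 2 * ((2 - ν) / 2) * lam ^ (-β) := by rw [mul_add, heq]; ring
  refine key2.trans (add_le_add_right ?_ _)
  have hlameq : lam ^ (-β) = (2 * ν) ^ β * (a ^ β * t ^ β) := by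
    rw [hlam, Real.inv_rpow (by positivity), Real.rpow_neg (by positivity), inv_inv,
      show 2 * a * ν * t = (2 * ν) * (a * t) by ring,
      Real.mul_rpow (by positivity) (by positivity),
      Real.mul_rpow ha.le ht.le]
  have hrhs : a ^ (2 / (2 - ν)) * t ^ β = a * (a ^ β * t ^ β) := by
    rw [show 2 / (2 - ν) = 1 + β by rw [hβ]; field_simp; ring,
      Real.rpow_add ha, Real.rpow_one, mul_assoc]
  rw [hlameq, hrhs]
  have hQ : (2 * ν) ^ β ≤ 2 := by
    calc (2 * ν) ^ β ≤ 2 ^ β :=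
          Real.rpow_le_rpow (by positivity) (by linarith) hβ0
      _ ≤ 2 ^ (1:ℝ) := Real.rpow_le_rpow_of_exponent_le one_le_two hβ1
      _ = 2 := by norm_num
  have hQ0 : 0 ≤ (2 * ν) ^ β := by positivity
  have hP0 : 0 ≤ a ^ β * t ^ β := by positivity
  have h1 : (2 - ν) * ((2 * ν) ^ β) ≤ 4 := by nlinarith
  have h2 := mul_le_mul_of_nonneg_right h1 (mul_nonneg (by positivity : (0:ℝ) ≤ a / 4) hP0)
  nlinarith [h2]

lemma aux_subadd {ν : ℝ} (hν₀ : 0 < ν) (hν₁ : ν ≤ 1) {c d : ℝ} (hc : 0 ≤ c) (hd : 0 ≤ d) :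
    (c + d) ^ ν ≤ c ^ ν + d ^ ν := by
  have h := NNReal.rpow_add_le_add_rpow (Real.toNNReal c) (Real.toNNReal d) hν₀.le hν₁
  have := NNReal.coe_le_coe.2 h
  push_cast at this
  rwa [Real.coe_toNNReal c hc, Real.coe_toNNReal d hd] at this

lemma heat_key (n : ℕ) (a ν : ℝ) (ha : 0 < a) (hν₀ : 0 < ν) (hν₁ : ν ≤ 1)
    (u₀ : EuclideanSpace ℝ (Fin n) → ℝ) (hm : StronglyMeasurable u₀)
    (t : ℝ) (ht : 0 < t) :
    ∫⁻ x, ENNReal.ofReal (heatSol n u₀ t x ^ 2 * rexp (a * ‖x‖ ^ ν)) ≤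
      (ENNReal.ofReal (2 ^ ((n:ℝ)/2) * rexp (a ^ (2/(2-ν)) * t ^ (ν/(2-ν)))))^2 *
        ∫⁻ y, ENNReal.ofReal (u₀ y ^ 2 * rexp (a * ‖y‖ ^ ν)) := by
  have hπt : (0:ℝ) < 4 * π * t := by positivity
  set c : ℝ := (4 * π * t) ^ (-(n:ℝ)/2) with hc
  have hc0 : 0 < c := Real.rpow_pos_of_pos hπt _
  set C : ℝ := a ^ (2/(2-ν)) * t ^ (ν/(2-ν)) with hC
  have hC0 : 0 ≤ C := by positivity
  set G : EuclideanSpace ℝ (Fin n) → ℝ≥0∞ :=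
    fun z => ENNReal.ofReal (rexp C * (c * rexp (-‖z‖^2/(8*t)))) with hG
  set F : EuclideanSpace ℝ (Fin n) → ℝ≥0∞ :=
    fun y => ENNReal.ofReal (|u₀ y| * rexp (a * ‖y‖^ν/2)) with hF
  have hGm : Measurable G := by
    apply Measurable.ennreal_ofReal
    fun_prop
  have hFm : Measurable F := by
    apply Measurable.ennreal_ofReal
    have : Measurable u₀ := hm.measurable
    fun_prop
  -- the kernel bound
  have hker : ∀ x y : EuclideanSpace ℝ (Fin n),
      c * rexp (-‖x - y‖^2/(4*t)) * rexp (a * ‖x‖^ν/2)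
      ≤ (rexp C * (c * rexp (-‖x-y‖^2/(8*t)))) * rexp (a * ‖y‖^ν/2) := by
    intro x y
    have hsub : ‖x‖ ^ ν ≤ ‖x - y‖ ^ ν + ‖y‖ ^ ν := by
      have htri : ‖x‖ ≤ ‖x - y‖ + ‖y‖ := by
        simpa using norm_add_le (x - y) y
      calc ‖x‖ ^ ν ≤ (‖x - y‖ + ‖y‖) ^ ν :=
            Real.rpow_le_rpow (norm_nonneg _) htri hν₀.le
        _ ≤ _ := aux_subadd hν₀ hν₁ (norm_nonneg _) (norm_nonneg _)
    have hy := aux_young ha hν₀ hν₁ ht (norm_nonneg (x - y))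
    have hdiv : ‖x - y‖^2/(4*t) = 2*(‖x - y‖^2/(8*t)) := by field_simp; ring
    have hmul : a * ‖x‖ ^ ν ≤ a * ‖x - y‖ ^ ν + a * ‖y‖ ^ ν := by nlinarith
    have hexp : -‖x-y‖^2/(4*t) + a * ‖x‖^ν/2 ≤ C + -‖x-y‖^2/(8*t) + a * ‖y‖^ν/2 := by
      rw [neg_div, neg_div]
      linarith
    calc c * rexp (-‖x - y‖^2/(4*t)) * rexp (a * ‖x‖^ν/2)
        = c * rexp (-‖x-y‖^2/(4*t) + a * ‖x‖^ν/2) := by rw [mul_assoc, ← Real.exp_add]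
      _ ≤ c * rexp (C + -‖x-y‖^2/(8*t) + a * ‖y‖^ν/2) :=
          mul_le_mul_of_nonneg_left (Real.exp_le_exp.2 hexp) hc0.le
      _ = (rexp C * (c * rexp (-‖x-y‖^2/(8*t)))) * rexp (a * ‖y‖^ν/2) := by
          rw [Real.exp_add, Real.exp_add]; ring
  -- step 1: pointwise domination after weighting
  have h1 : ∀ x, ENNReal.ofReal (|heatSol n u₀ t x| * rexp (a * ‖x‖^ν/2)) ≤
      ∫⁻ y, G (x - y) * F y := by
    intro x
    rw [ENNReal.ofReal_mul (abs_nonneg _)]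
    have hnorm : ENNReal.ofReal |heatSol n u₀ t x| ≤
        ∫⁻ y, ENNReal.ofReal |c * rexp (-‖x - y‖^2/(4*t)) * u₀ y| := by
      rw [← Real.enorm_eq_ofReal_abs]
      refine le_trans (enorm_integral_le_lintegral_enorm _) (le_of_eq ?_)
      exact lintegral_congr fun y => by rw [Real.enorm_eq_ofReal_abs]
    calc ENNReal.ofReal |heatSol n u₀ t x| * ENNReal.ofReal (rexp (a * ‖x‖^ν/2))
        ≤ (∫⁻ y, ENNReal.ofReal |c * rexp (-‖x - y‖^2/(4*t)) * u₀ y|) *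
            ENNReal.ofReal (rexp (a * ‖x‖^ν/2)) := mul_le_mul_left hnorm _
      _ = ∫⁻ y, ENNReal.ofReal |c * rexp (-‖x - y‖^2/(4*t)) * u₀ y| *
            ENNReal.ofReal (rexp (a * ‖x‖^ν/2)) :=
          (lintegral_mul_const' _ _ ENNReal.ofReal_ne_top).symm
      _ ≤ ∫⁻ y, G (x - y) * F y := by
          refine lintegral_mono fun y => ?_
          rw [← ENNReal.ofReal_mul (abs_nonneg _), hG, hF]
          rw [← ENNReal.ofReal_mul (by positivity)]
          apply ENNReal.ofReal_le_ofReal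
          have habs : |c * rexp (-‖x - y‖^2/(4*t)) * u₀ y| =
              c * rexp (-‖x - y‖^2/(4*t)) * |u₀ y| := by
            rw [abs_mul, abs_mul, abs_of_pos hc0, abs_of_pos (Real.exp_pos _)]
          rw [habs]
          calc c * rexp (-‖x - y‖^2/(4*t)) * |u₀ y| * rexp (a * ‖x‖^ν/2)
              = (c * rexp (-‖x - y‖^2/(4*t)) * rexp (a * ‖x‖^ν/2)) * |u₀ y| := by ring
            _ ≤ ((rexp C * (c * rexp (-‖x-y‖^2/(8*t)))) * rexp (a * ‖y‖^ν/2)) * |u₀ y| :=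
                mul_le_mul_of_nonneg_right (hker x y) (abs_nonneg _)
            _ = rexp C * (c * rexp (-‖x - y‖^2/(8*t))) * (|u₀ y| * rexp (a * ‖y‖^ν/2)) := by
                ring
  -- squaring identity
  have hsq : ∀ x, ENNReal.ofReal (heatSol n u₀ t x ^ 2 * rexp (a * ‖x‖^ν)) =
      (ENNReal.ofReal (|heatSol n u₀ t x| * rexp (a * ‖x‖^ν/2)))^2 := by
    intro x
    rw [← ENNReal.ofReal_pow (by positivity)]
    congr 1
    rw [mul_pow, sq_abs, pow_two (rexp _), ← Real.exp_add]
    congr 2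
    ring
  have hFsq : ∀ y, (F y)^2 = ENNReal.ofReal (u₀ y ^ 2 * rexp (a * ‖y‖^ν)) := by
    intro y
    rw [hF, ← ENNReal.ofReal_pow (by positivity)]
    congr 1
    rw [mul_pow, sq_abs, pow_two (rexp _), ← Real.exp_add]
    congr 2
    ring
  set IG : ℝ≥0∞ := ∫⁻ z, G z with hIG
  -- Gaussian integral computation
  have hgauss : Integrable (fun z : EuclideanSpace ℝ (Fin n) => rexp (-(1/(8*t)) * ‖z‖^2)) := by
    have hb : (0:ℝ) < 1/(8*t) := by positivity
    have := (GaussianFourier.integrable_cexp_neg_mul_sq_norm_add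
      (b := ((1/(8*t) : ℝ) : ℂ)) (by simpa using hb) 0
      (0 : EuclideanSpace ℝ (Fin n))).norm
    simpa [Complex.norm_exp, ← Complex.ofReal_pow] using this
  have hGint : Integrable (fun z : EuclideanSpace ℝ (Fin n) =>
      rexp C * (c * rexp (-‖z‖^2/(8*t)))) := by
    have := (hgauss.const_mul (rexp C * c))
    refine this.congr (ae_of_all _ fun z => ?_)
    show rexp C * c * rexp (-(1/(8*t)) * ‖z‖^2) = rexp C * (c * rexp (-‖z‖^2/(8*t)))
    rw [show -(1/(8*t)) * ‖z‖^2 = -‖z‖^2/(8*t) by ring]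
    ring
  have hIGval : IG = ENNReal.ofReal (2 ^ ((n:ℝ)/2) * rexp C) := by
    rw [hIG, hG, ← ofReal_integral_eq_lintegral_ofReal hGint
      (ae_of_all _ fun z => by positivity)]
    congr 1
    have h5 : ∫ z : EuclideanSpace ℝ (Fin n), rexp C * (c * rexp (-‖z‖^2/(8*t)))
        = (rexp C * c) * ∫ z : EuclideanSpace ℝ (Fin n), rexp (-(1/(8*t)) * ‖z‖^2) := by
      rw [← integral_const_mul]
      refine integral_congr_ae (ae_of_all _ fun z => ?_)
      show rexp C * (c * rexp (-‖z‖^2/(8*t))) = rexp C * c * rexp (-(1/(8*t)) * ‖z‖^2)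
      rw [show -(1/(8*t)) * ‖z‖^2 = -‖z‖^2/(8*t) by ring]
      ring
    rw [h5, GaussianFourier.integral_rexp_neg_mul_sq_norm (by positivity : (0:ℝ) < 1/(8*t))]
    have hrank : (Module.finrank ℝ (EuclideanSpace ℝ (Fin n)) : ℝ) = (n:ℝ) := by
      simp [finrank_euclideanSpace_fin]
    rw [hrank]
    have hπdiv : π / (1/(8*t)) = 2 * (4 * π * t) := by field_simp; ring
    rw [hπdiv, Real.mul_rpow (by norm_num) hπt.le, hc,
      show rexp C * ((4*π*t) ^ (-(n:ℝ)/2)) * (2 ^ ((n:ℝ)/2) * (4*π*t) ^ ((n:ℝ)/2))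
        = 2 ^ ((n:ℝ)/2) * rexp C * ((4*π*t) ^ (-(n:ℝ)/2) * (4*π*t) ^ ((n:ℝ)/2)) by ring,
      ← Real.rpow_add hπt, show -(n:ℝ)/2 + (n:ℝ)/2 = 0 by ring, Real.rpow_zero, mul_one]
  have hIGtop : IG ≠ ∞ := by rw [hIGval]; exact ENNReal.ofReal_ne_top
  -- Cauchy-Schwarz step
  have hCS : ∀ x, (∫⁻ y, G (x - y) * F y)^2 ≤ IG * ∫⁻ y, G (x - y) * (F y)^2 := by
    intro x
    have hGx : Measurable (fun y : EuclideanSpace ℝ (Fin n) => G (x - y)) :=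
      hGm.comp (measurable_const.sub measurable_id)
    have hpq : Real.HolderConjugate 2 2 := Real.HolderConjugate.two_two
    have hH := ENNReal.lintegral_mul_le_Lp_mul_Lq volume hpq
      (f := fun y => (G (x - y)) ^ ((1:ℝ)/2))
      (g := fun y => (G (x - y)) ^ ((1:ℝ)/2) * F y)
      ((hGx.pow_const _).aemeasurable)
      (((hGx.pow_const _).mul hFm).aemeasurable)
    have hfg : ∀ y, ((G (x - y)) ^ ((1:ℝ)/2)) * ((G (x - y)) ^ ((1:ℝ)/2) * F y)
        = G (x - y) * F y := by
      intro y
      rw [← mul_assoc, ← ENNReal.rpow_add_of_nonneg _ _ (by norm_num) (by norm_num)]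
      norm_num
    have hf2 : ∀ y, ((G (x - y)) ^ ((1:ℝ)/2)) ^ (2:ℝ) = G (x - y) := by
      intro y
      rw [← ENNReal.rpow_mul]
      norm_num
    have hg2 : ∀ y, ((G (x - y)) ^ ((1:ℝ)/2) * F y) ^ (2:ℝ) = G (x - y) * (F y)^2 := by
      intro y
      rw [ENNReal.mul_rpow_of_nonneg _ _ (by norm_num : (0:ℝ) ≤ 2),
        ← ENNReal.rpow_mul, show (2:ℝ) = ((2:ℕ):ℝ) by norm_num, ENNReal.rpow_natCast]
      norm_num
    have htrans : ∫⁻ y, G (x - y) = IG := by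
      rw [hIG]
      exact (Measure.measurePreserving_sub_left volume x).lintegral_comp hGm
    have hH' : ∫⁻ y, G (x - y) * F y ≤
        IG ^ ((1:ℝ)/2) * (∫⁻ y, G (x - y) * (F y)^2) ^ ((1:ℝ)/2) := by
      calc ∫⁻ y, G (x - y) * F y
          = ∫⁻ y, ((G (x - y)) ^ ((1:ℝ)/2)) * ((G (x - y)) ^ ((1:ℝ)/2) * F y) :=
            lintegral_congr fun y => (hfg y).symm
        _ ≤ (∫⁻ y, ((G (x - y)) ^ ((1:ℝ)/2)) ^ (2:ℝ)) ^ ((1:ℝ)/2) *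
            (∫⁻ y, ((G (x - y)) ^ ((1:ℝ)/2) * F y) ^ (2:ℝ)) ^ ((1:ℝ)/2) := hH
        _ = IG ^ ((1:ℝ)/2) * (∫⁻ y, G (x - y) * (F y)^2) ^ ((1:ℝ)/2) := by
            rw [lintegral_congr hf2, lintegral_congr hg2, htrans]
    calc (∫⁻ y, G (x - y) * F y)^2
        ≤ (IG ^ ((1:ℝ)/2) * (∫⁻ y, G (x - y) * (F y)^2) ^ ((1:ℝ)/2))^2 := by gcongr
      _ = IG * ∫⁻ y, G (x - y) * (F y)^2 := by
          rw [mul_pow, ← ENNReal.rpow_natCast (IG ^ ((1:ℝ)/2)) 2,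
            ← ENNReal.rpow_natCast ((∫⁻ y, G (x - y) * (F y)^2) ^ ((1:ℝ)/2)) 2,
            ← ENNReal.rpow_mul, ← ENNReal.rpow_mul]
          norm_num
  -- Fubini step
  have hswap : ∫⁻ x, ∫⁻ y, G (x - y) * (F y)^2 = IG * ∫⁻ y, (F y)^2 := by
    rw [lintegral_lintegral_swap]
    · have hinner : ∀ y, ∫⁻ x, G (x - y) * (F y)^2 = IG * (F y)^2 := by
        intro y
        rw [lintegral_mul_const' ((F y)^2) _ (by
          exact ENNReal.pow_ne_top ENNReal.ofReal_ne_top), hIG,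
          lintegral_sub_right_eq_self G y]
      rw [lintegral_congr hinner]
      exact lintegral_const_mul' _ _ hIGtop
    · exact ((hGm.comp (measurable_fst.sub measurable_snd)).mul
        ((hFm.comp measurable_snd).pow_const 2)).aemeasurable
  -- put everything together
  calc ∫⁻ x, ENNReal.ofReal (heatSol n u₀ t x ^ 2 * rexp (a * ‖x‖ ^ ν))
      = ∫⁻ x, (ENNReal.ofReal (|heatSol n u₀ t x| * rexp (a * ‖x‖^ν/2)))^2 :=
        lintegral_congr hsq
    _ ≤ ∫⁻ x, (∫⁻ y, G (x - y) * F y)^2 := lintegral_mono fun x => by gcongr; exact h1 x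
    _ ≤ ∫⁻ x, IG * ∫⁻ y, G (x - y) * (F y)^2 := lintegral_mono hCS
    _ = IG * ∫⁻ x, ∫⁻ y, G (x - y) * (F y)^2 := lintegral_const_mul' _ _ hIGtop
    _ = IG * (IG * ∫⁻ y, (F y)^2) := by rw [hswap]
    _ = IG^2 * ∫⁻ y, (F y)^2 := by rw [← mul_assoc, sq]
    _ = (ENNReal.ofReal (2 ^ ((n:ℝ)/2) * rexp C))^2 *
          ∫⁻ y, ENNReal.ofReal (u₀ y ^ 2 * rexp (a * ‖y‖ ^ ν)) := by
        rw [hIGval, lintegral_congr hFsq]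

/-- Persistence of the heat semigroup in the weighted space `L²(e^{a|x|^ν} dx)`,
`0 < ν ≤ 1`. -/
theorem heat_semigroup_persistence_exp_weight (n : ℕ) (hn : 0 < n)
    (a ν : ℝ) (ha : 0 < a) (hν₀ : 0 < ν) (hν₁ : ν ≤ 1)
    (u₀ : EuclideanSpace ℝ (Fin n) → ℝ)
    (hu₀ : Integrable (fun x => u₀ x ^ 2 * Real.exp (a * ‖x‖ ^ ν)))
    (t : ℝ) (ht : 0 < t) :
    (∫ x, heatSol n u₀ t x ^ 2 * Real.exp (a * ‖x‖ ^ ν)) ^ (1/2 : ℝ) ≤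
      2 ^ ((n : ℝ) / 2) * Real.exp (a ^ (2 / (2 - ν)) * t ^ (ν / (2 - ν))) *
        (∫ x, u₀ x ^ 2 * Real.exp (a * ‖x‖ ^ ν)) ^ (1/2 : ℝ) := by
  have hπt : (0:ℝ) < 4 * π * t := by positivity
  set I : ℝ := 2 ^ ((n:ℝ)/2) * rexp (a ^ (2/(2-ν)) * t ^ (ν/(2-ν))) with hI
  have hI0 : 0 < I := by positivity
  by_cases hu : AEStronglyMeasurable u₀ volume
  · obtain ⟨v, hv, huv⟩ := hu
    have hheq : ∀ x, heatSol n u₀ t x = heatSol n v t x := by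
      intro x
      apply integral_congr_ae
      filter_upwards [huv] with y hy
      rw [hy]
    have hMeq : ∫ x, u₀ x ^ 2 * rexp (a * ‖x‖ ^ ν) = ∫ x, v x ^ 2 * rexp (a * ‖x‖ ^ ν) := by
      apply integral_congr_ae
      filter_upwards [huv] with y hy
      rw [hy]
    have hIv : Integrable (fun x => v x ^ 2 * rexp (a * ‖x‖ ^ ν)) := by
      refine hu₀.congr ?_
      filter_upwards [huv] with y hy
      rw [hy]
    set Mv : ℝ := ∫ x, v x ^ 2 * rexp (a * ‖x‖ ^ ν) with hMv
    have hMv0 : 0 ≤ Mv := integral_nonneg fun x => by positivity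
    have hkey := heat_key n a ν ha hν₀ hν₁ v hv t ht
    have hMvl : ∫⁻ y, ENNReal.ofReal (v y ^ 2 * rexp (a * ‖y‖ ^ ν)) = ENNReal.ofReal Mv :=
      (ofReal_integral_eq_lintegral_ofReal hIv (ae_of_all _ fun x => by positivity)).symm
    rw [hMvl] at hkey
    have hsm : AEStronglyMeasurable (fun x => heatSol n v t x ^ 2 * rexp (a * ‖x‖ ^ ν))
        volume := by
      have hvm : Measurable v := hv.measurable
      have hf : StronglyMeasurable (Function.uncurry fun (x y : EuclideanSpace ℝ (Fin n)) =>
          (4 * π * t) ^ (-(n : ℝ) / 2) * rexp (-‖x - y‖ ^ 2 / (4 * t)) * v y) := by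
        apply Measurable.stronglyMeasurable
        have : (Function.uncurry fun (x y : EuclideanSpace ℝ (Fin n)) =>
            (4 * π * t) ^ (-(n : ℝ) / 2) * rexp (-‖x - y‖ ^ 2 / (4 * t)) * v y) =
            fun p : EuclideanSpace ℝ (Fin n) × EuclideanSpace ℝ (Fin n) =>
            (4 * π * t) ^ (-(n : ℝ) / 2) * rexp (-‖p.1 - p.2‖ ^ 2 / (4 * t)) * v p.2 := rfl
        rw [this]
        fun_prop
      have h0 : StronglyMeasurable (fun x => heatSol n v t x) := hf.integral_prod_right'
      exact ((h0.measurable.pow_const 2).mul (by fun_prop)).aestronglyMeasurable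
    have hL : ∫ x, heatSol n v t x ^ 2 * rexp (a * ‖x‖ ^ ν) =
        (∫⁻ x, ENNReal.ofReal (heatSol n v t x ^ 2 * rexp (a * ‖x‖ ^ ν))).toReal :=
      integral_eq_lintegral_of_nonneg_ae (ae_of_all _ fun x => by positivity) hsm
    have hfin : ∫ x, heatSol n v t x ^ 2 * rexp (a * ‖x‖ ^ ν) ≤ I ^ 2 * Mv := by
      rw [hL]
      have hub : (ENNReal.ofReal I) ^ 2 * ENNReal.ofReal Mv ≠ ⊤ :=
        ENNReal.mul_ne_top (ENNReal.pow_ne_top ENNReal.ofReal_ne_top) ENNReal.ofReal_ne_top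
      calc (∫⁻ x, ENNReal.ofReal (heatSol n v t x ^ 2 * rexp (a * ‖x‖ ^ ν))).toReal
          ≤ ((ENNReal.ofReal I) ^ 2 * ENNReal.ofReal Mv).toReal :=
            ENNReal.toReal_mono hub hkey
        _ = I ^ 2 * Mv := by
            rw [ENNReal.toReal_mul, ENNReal.toReal_pow, ENNReal.toReal_ofReal hI0.le,
              ENNReal.toReal_ofReal hMv0]
    simp only [hheq, hMeq]
    calc (∫ x, heatSol n v t x ^ 2 * rexp (a * ‖x‖ ^ ν)) ^ (1/2 : ℝ)
        ≤ (I ^ 2 * Mv) ^ (1/2 : ℝ) :=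
          Real.rpow_le_rpow (integral_nonneg fun x => by positivity) hfin (by norm_num)
      _ = I * Mv ^ (1/2 : ℝ) := by
          rw [Real.mul_rpow (sq_nonneg I) hMv0, ← Real.rpow_natCast I 2,
            ← Real.rpow_mul hI0.le]
          norm_num
  · have hzero : ∀ x, heatSol n u₀ t x = 0 := by
      intro x
      apply integral_undef
      intro hint
      apply hu
      have h2 := hint.aestronglyMeasurable
      have hden : Continuous fun y : EuclideanSpace ℝ (Fin n) =>
          (4 * π * t) ^ (-(n : ℝ) / 2) * rexp (-‖x - y‖ ^ 2 / (4 * t)) := by fun_prop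
      have heq : u₀ = fun y =>
          ((4 * π * t) ^ (-(n : ℝ) / 2) * rexp (-‖x - y‖ ^ 2 / (4 * t)))⁻¹ *
            ((4 * π * t) ^ (-(n : ℝ) / 2) * rexp (-‖x - y‖ ^ 2 / (4 * t)) * u₀ y) := by
        funext y
        have hne : (4 * π * t) ^ (-(n : ℝ) / 2) * rexp (-‖x - y‖ ^ 2 / (4 * t)) ≠ 0 := by
          positivity
        exact (inv_mul_cancel_left₀ hne (u₀ y)).symm
      rw [heq]
      have hcont : Continuous fun y : EuclideanSpace ℝ (Fin n) =>
          ((4 * π * t) ^ (-(n : ℝ) / 2) * rexp (-‖x - y‖ ^ 2 / (4 * t)))⁻¹ :=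
        hden.inv₀ fun y => by positivity
      exact hcont.aestronglyMeasurable.mul h2
    have hLz : ∫ x, heatSol n u₀ t x ^ 2 * rexp (a * ‖x‖ ^ ν) = 0 := by
      simp [hzero]
    rw [hLz, Real.zero_rpow (by norm_num : (1/2 : ℝ) ≠ 0)]
    have hM0 : (0:ℝ) ≤ ∫ x, u₀ x ^ 2 * rexp (a * ‖x‖ ^ ν) :=
      integral_nonneg fun x => by positivity
    positivity
end
end

section
/- Let ν > 0, T > 0, and r > 0, and let ρ(x) = ⟨x⟩^{−ν} or ρ(x) = e^{−|x|}. Then there is no constant C > 0 such that every solution u of the heat equation with initial datum in L²(ℝⁿ) satisfies ∫_{ℝⁿ} u(T,x)² ρ(x) dx ≤ C ∫_0^T ∫_{B_r} u(t,x)² dx dt. -/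
open MeasureTheory Real Set

noncomputable section

variable {E : Type*} [NormedAddCommGroup E] [InnerProductSpace ℝ E]

lemma complete_square (a : ℝ) (ha : 0 < a) (x z y : E) :
    a * ‖x - y‖ ^ 2 + ‖y - z‖ ^ 2 =
      (a + 1) * ‖y - ((a / (a + 1)) • x + (1 / (a + 1)) • z)‖ ^ 2
        + (a / (a + 1)) * ‖x - z‖ ^ 2 := by
  have h1 : (0:ℝ) < a + 1 := by linarith
  simp only [@norm_sub_sq_real, @norm_add_sq_real, real_inner_smul_left,
    real_inner_smul_right, inner_add_right, inner_add_left, norm_smul,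
    Real.norm_eq_abs, abs_of_pos, mul_pow, sq_abs]
  rw [real_inner_comm y x, real_inner_comm z x, real_inner_comm z y]
  field_simp
  ring

abbrev Efin (n : ℕ) := EuclideanSpace ℝ (Fin n)

lemma integrable_gauss {n : ℕ} {b : ℝ} (hb : 0 < b) (m : Efin n) :
    Integrable (fun y : Efin n => rexp (-(b * ‖y - m‖ ^ 2))) := by
  have h := (GaussianFourier.integrable_cexp_neg_mul_sq_norm_add (V := Efin n)
    (b := (b : ℂ)) (by simpa using hb) 0 0).norm
  have h2 : Integrable (fun y : Efin n => rexp (-(b * ‖y‖ ^ 2))) := by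
    refine h.congr (Filter.Eventually.of_forall fun v => ?_)
    simp only [Complex.norm_exp]
    norm_num
    left
    rw [← Complex.ofReal_pow, Complex.ofReal_re]
  exact h2.comp_sub_right m

lemma integral_gauss_shift {n : ℕ} {b : ℝ} (hb : 0 < b) (m : Efin n) :
    ∫ y : Efin n, rexp (-(b * ‖y - m‖ ^ 2)) = (π / b) ^ ((n : ℝ) / 2) := by
  rw [integral_sub_right_eq_self (fun y : Efin n => rexp (-(b * ‖y‖ ^ 2))) m]
  have := GaussianFourier.integral_rexp_neg_mul_sq_norm (V := Efin n) hb
  simpa [neg_mul, finrank_euclideanSpace_fin] using this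

lemma heatSol_gauss {n : ℕ} (x₀ : Efin n) {t : ℝ} (ht : 0 < t) (x : Efin n) :
    heatSol n (fun y => rexp (-‖y - x₀‖ ^ 2)) t x
      = (1 + 4 * t) ^ (-(n : ℝ) / 2) * rexp (-‖x - x₀‖ ^ 2 / (1 + 4 * t)) := by
  have h4t : (0:ℝ) < 4 * t := by linarith
  set a : ℝ := 1 / (4 * t) with ha_def
  have ha : 0 < a := by positivity
  have ha1 : (0:ℝ) < a + 1 := by linarith
  set m : Efin n := (a / (a + 1)) • x + (1 / (a + 1)) • x₀ with hm
  have key : ∀ y : Efin n,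
      (4 * π * t) ^ (-(n : ℝ) / 2) * rexp (-‖x - y‖ ^ 2 / (4 * t)) * rexp (-‖y - x₀‖ ^ 2)
      = ((4 * π * t) ^ (-(n : ℝ) / 2) * rexp (-(a / (a + 1) * ‖x - x₀‖ ^ 2)))
          * rexp (-((a + 1) * ‖y - m‖ ^ 2)) := by
    intro y
    have hexp : rexp (-‖x - y‖ ^ 2 / (4 * t)) * rexp (-‖y - x₀‖ ^ 2)
        = rexp (-(a / (a + 1) * ‖x - x₀‖ ^ 2)) * rexp (-((a + 1) * ‖y - m‖ ^ 2)) := by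
      rw [← Real.exp_add, ← Real.exp_add]
      congr 1
      have hd : -‖x - y‖ ^ 2 / (4 * t) = -(a * ‖x - y‖ ^ 2) := by
        rw [ha_def]; field_simp
      rw [hd]
      have hcs := complete_square a ha x x₀ y
      nlinarith [hcs]
    rw [mul_assoc _ (rexp _) (rexp _), hexp, ← mul_assoc]
  unfold heatSol
  rw [integral_congr_ae (Filter.Eventually.of_forall key)]
  rw [integral_const_mul, integral_gauss_shift ha1 m]
  have hπ : (0:ℝ) < π := pi_pos
  have h1 : π / (a + 1) = 4 * π * t / (1 + 4 * t) := by
    rw [ha_def]; field_simp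
  have h2 : a / (a + 1) = 1 / (1 + 4 * t) := by
    rw [ha_def]; field_simp
  rw [h1, h2]
  have harith : (4 * π * t) ^ (-(n : ℝ) / 2) * (4 * π * t / (1 + 4 * t)) ^ ((n : ℝ) / 2)
      = (1 + 4 * t) ^ (-(n : ℝ) / 2) := by
    have hA : (0:ℝ) < (4 * π * t) ^ ((n : ℝ) / 2) := Real.rpow_pos_of_pos (by positivity) _
    have hB : (0:ℝ) < (1 + 4 * t) ^ ((n : ℝ) / 2) := Real.rpow_pos_of_pos (by linarith) _
    rw [Real.div_rpow (by positivity) (by linarith), neg_div, Real.rpow_neg (by positivity),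
      Real.rpow_neg (by linarith)]
    field_simp
  have hexp2 : rexp (-(1 / (1 + 4 * t) * ‖x - x₀‖ ^ 2)) = rexp (-‖x - x₀‖ ^ 2 / (1 + 4 * t)) := by
    congr 1; ring
  rw [hexp2, mul_right_comm, harith]

lemma heatSol_gauss_sq {n : ℕ} (x₀ : Efin n) {t : ℝ} (ht : 0 < t) (x : Efin n) :
    heatSol n (fun y => rexp (-‖y - x₀‖ ^ 2)) t x ^ 2
      = (1 + 4 * t) ^ (-(n : ℝ)) * rexp (-(2 / (1 + 4 * t) * ‖x - x₀‖ ^ 2)) := by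
  rw [heatSol_gauss x₀ ht x, mul_pow, ← Real.exp_nat_mul,
    ← Real.rpow_natCast ((1 + 4 * t) ^ (-(n:ℝ) / 2)) 2,
    ← Real.rpow_mul (by linarith : (0:ℝ) ≤ 1 + 4 * t)]
  have h2 : (-(n:ℝ)/2) * ((2:ℕ):ℝ) = -(n:ℝ) := by push_cast; ring
  rw [h2]
  congr 1
  field_simp
  push_cast; ring_nf

lemma memLp_u0 (n : ℕ) (x₀ : Efin n) :
    MemLp (fun y : Efin n => rexp (-‖y - x₀‖ ^ 2)) 2 volume := by
  have hc : Continuous fun y : Efin n => rexp (-‖y - x₀‖ ^ 2) := by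
    exact (Real.continuous_exp.comp (((continuous_id.sub continuous_const).norm.pow 2).neg))
  rw [memLp_two_iff_integrable_sq hc.aestronglyMeasurable]
  have heq : (fun y : Efin n => rexp (-‖y - x₀‖ ^ 2) ^ 2)
      = fun y => rexp (-(2 * ‖y - x₀‖ ^ 2)) := by
    funext y
    rw [← Real.exp_nat_mul]
    congr 1; push_cast; ring
  rw [heq]
  exact integrable_gauss (by norm_num) x₀

set_option maxHeartbeats 1000000 in
open Filter in
lemma core (n : ℕ) (hn : 0 < n) (T r μ : ℝ) (hT : 0 < T) (hr : 0 < r) (hμ : 0 < μ)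
    (ρ : Efin n → ℝ) (hρm : Measurable ρ) (hρ0 : ∀ x, 0 ≤ ρ x) (hρ1 : ∀ x, ρ x ≤ 1)
    (hρlb : ∀ x, rexp (-(μ * ‖x‖)) ≤ ρ x) :
    ¬ ∃ C > (0:ℝ), ∀ u₀ : Efin n → ℝ, MemLp u₀ 2 volume →
      ∫ x, heatSol n u₀ T x ^ 2 * ρ x ≤
        C * ∫ t in Set.Ioo (0:ℝ) T, ∫ x in Metric.ball 0 r, heatSol n u₀ t x ^ 2 := by
  rintro ⟨C, hC, h⟩
  have hT1 : (0:ℝ) < 1 + 4 * T := by linarith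
  have hc₀pos : (0:ℝ) < (1 + 4 * T) ^ (-(n:ℝ)) := Real.rpow_pos_of_pos hT1 _
  set c₀ : ℝ := (1 + 4 * T) ^ (-(n:ℝ)) with hc₀
  have hvol1 : 0 < (volume (Metric.ball (0:Efin n) 1)).toReal :=
    ENNReal.toReal_pos (Metric.measure_ball_pos volume 0 one_pos).ne' measure_ball_lt_top.ne
  set V₁ : ℝ := (volume (Metric.ball (0:Efin n) 1)).toReal with hV₁
  set Vr : ℝ := (volume (Metric.ball (0:Efin n) r)).toReal with hVr
  have hVrnn : 0 ≤ Vr := ENNReal.toReal_nonneg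
  set K₁ : ℝ := V₁ * (c₀ * rexp (-(2 / (1 + 4 * T)))) with hK₁def
  have hK₁ : 0 < K₁ := by positivity
  set K₂ : ℝ := T * Vr with hK₂def
  have hK₂ : 0 ≤ K₂ := by positivity
  set s : ℝ := max ((μ + 1) * (1 + 4 * T) / 2) (μ * (r + 1) + Real.log (C * K₂ / K₁ + 1)) with hs_def
  have hs1 : (μ + 1) * (1 + 4 * T) / 2 ≤ s := le_max_left _ _
  have hs2 : μ * (r + 1) + Real.log (C * K₂ / K₁ + 1) ≤ s := le_max_right _ _
  have hs0 : 0 < s := lt_of_lt_of_le (by positivity) hs1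
  set R : ℝ := r + s with hR_def
  have hrR : r ≤ R := by linarith
  have hR0 : 0 < R := by linarith
  set x₀ : Efin n := EuclideanSpace.single (⟨0, hn⟩ : Fin n) R with hx₀def
  have hx₀ : ‖x₀‖ = R := by
    rw [hx₀def, EuclideanSpace.norm_single, Real.norm_eq_abs, abs_of_pos hR0]
  have hu := h (fun y => rexp (-‖y - x₀‖ ^ 2)) (memLp_u0 n x₀)
  -- LOWER BOUND on the weighted integral
  have hGint : Integrable (fun x : Efin n => c₀ * rexp (-(2 / (1 + 4 * T) * ‖x - x₀‖ ^ 2))) :=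
    (integrable_gauss (b := 2 / (1 + 4 * T)) (by positivity) x₀).const_mul c₀
  have hGcont : Continuous (fun x : Efin n => c₀ * rexp (-(2 / (1 + 4 * T) * ‖x - x₀‖ ^ 2))) :=
    continuous_const.mul (Real.continuous_exp.comp
      ((continuous_const.mul ((continuous_id.sub continuous_const).norm.pow 2)).neg))
  have hgmeas : AEStronglyMeasurable
      (fun x : Efin n => c₀ * rexp (-(2 / (1 + 4 * T) * ‖x - x₀‖ ^ 2)) * ρ x) volume :=
    (hGcont.measurable.mul hρm).aestronglyMeasurable
  have hgint : Integrable (fun x : Efin n => c₀ * rexp (-(2 / (1 + 4 * T) * ‖x - x₀‖ ^ 2)) * ρ x) := by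
    refine hGint.mono' hgmeas (Eventually.of_forall fun x => ?_)
    have hGnn : 0 ≤ c₀ * rexp (-(2 / (1 + 4 * T) * ‖x - x₀‖ ^ 2)) := by positivity
    rw [Real.norm_eq_abs, abs_of_nonneg (mul_nonneg hGnn (hρ0 x))]
    calc c₀ * rexp (-(2 / (1 + 4 * T) * ‖x - x₀‖ ^ 2)) * ρ x
        ≤ c₀ * rexp (-(2 / (1 + 4 * T) * ‖x - x₀‖ ^ 2)) * 1 :=
          mul_le_mul_of_nonneg_left (hρ1 x) hGnn
      _ = c₀ * rexp (-(2 / (1 + 4 * T) * ‖x - x₀‖ ^ 2)) := mul_one _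
  have hgnonneg : 0 ≤ᵐ[volume] (fun x : Efin n => c₀ * rexp (-(2 / (1 + 4 * T) * ‖x - x₀‖ ^ 2)) * ρ x) :=
    Eventually.of_forall fun x => mul_nonneg (by positivity) (hρ0 x)
  have hLHSeq : ∫ x, heatSol n (fun y => rexp (-‖y - x₀‖ ^ 2)) T x ^ 2 * ρ x
      = ∫ x, c₀ * rexp (-(2 / (1 + 4 * T) * ‖x - x₀‖ ^ 2)) * ρ x := by
    refine integral_congr_ae (Eventually.of_forall fun x => ?_)
    simp only [heatSol_gauss_sq x₀ hT, hc₀]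
  have hball : ∀ x ∈ Metric.ball x₀ 1,
      c₀ * rexp (-(2 / (1 + 4 * T))) * rexp (-(μ * (R + 1)))
        ≤ c₀ * rexp (-(2 / (1 + 4 * T) * ‖x - x₀‖ ^ 2)) * ρ x := by
    intro x hx
    have hd : ‖x - x₀‖ < 1 := by rwa [Metric.mem_ball, dist_eq_norm] at hx
    have hd0 : 0 ≤ ‖x - x₀‖ := norm_nonneg _
    have h1 : rexp (-(2 / (1 + 4 * T))) ≤ rexp (-(2 / (1 + 4 * T) * ‖x - x₀‖ ^ 2)) := by
      apply Real.exp_le_exp.2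
      have hsq : ‖x - x₀‖ ^ 2 ≤ 1 := by nlinarith
      have h2T : (0:ℝ) ≤ 2 / (1 + 4 * T) := by positivity
      nlinarith
    have h2 : rexp (-(μ * (R + 1))) ≤ ρ x := by
      refine le_trans ?_ (hρlb x)
      apply Real.exp_le_exp.2
      have hxb : ‖x‖ ≤ R + 1 := by
        calc ‖x‖ = ‖x - x₀ + x₀‖ := by rw [sub_add_cancel]
          _ ≤ ‖x - x₀‖ + ‖x₀‖ := norm_add_le _ _
          _ ≤ R + 1 := by rw [hx₀]; linarith
      nlinarith
    exact mul_le_mul (mul_le_mul_of_nonneg_left h1 hc₀pos.le) h2 (Real.exp_pos _).le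
      (by positivity)
  have hlow : K₁ * rexp (-(μ * (R + 1))) ≤
      ∫ x, heatSol n (fun y => rexp (-‖y - x₀‖ ^ 2)) T x ^ 2 * ρ x := by
    rw [hLHSeq]
    have step1 : ∫ _x in Metric.ball x₀ 1, (c₀ * rexp (-(2 / (1 + 4 * T))) * rexp (-(μ * (R + 1))))
        ≤ ∫ x in Metric.ball x₀ 1, c₀ * rexp (-(2 / (1 + 4 * T) * ‖x - x₀‖ ^ 2)) * ρ x :=
      setIntegral_mono_on (integrableOn_const measure_ball_lt_top.ne)
        hgint.integrableOn Metric.isOpen_ball.measurableSet hball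
    have step2 : ∫ x in Metric.ball x₀ 1, c₀ * rexp (-(2 / (1 + 4 * T) * ‖x - x₀‖ ^ 2)) * ρ x
        ≤ ∫ x, c₀ * rexp (-(2 / (1 + 4 * T) * ‖x - x₀‖ ^ 2)) * ρ x :=
      setIntegral_le_integral hgint hgnonneg
    have step0 : ∫ _x in Metric.ball x₀ 1, (c₀ * rexp (-(2 / (1 + 4 * T))) * rexp (-(μ * (R + 1))))
        = V₁ * (c₀ * rexp (-(2 / (1 + 4 * T))) * rexp (-(μ * (R + 1)))) := by
      rw [setIntegral_const, smul_eq_mul, Measure.real, Measure.addHaar_ball_center volume x₀]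
    have heqK : K₁ * rexp (-(μ * (R + 1)))
        = V₁ * (c₀ * rexp (-(2 / (1 + 4 * T))) * rexp (-(μ * (R + 1)))) := by
      rw [hK₁def]; ring
    linarith
  -- UPPER BOUND on the observation term
  have hinner : ∀ t ∈ Set.Ioo (0:ℝ) T,
      (∫ x in Metric.ball (0:Efin n) r, heatSol n (fun y => rexp (-‖y - x₀‖ ^ 2)) t x ^ 2)
        ≤ Vr * rexp (-(2 / (1 + 4 * T) * s ^ 2)) := by
    rintro t ⟨ht0, htT⟩
    have ht1 : (0:ℝ) < 1 + 4 * t := by linarith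
    have hint_t : IntegrableOn
        (fun x => heatSol n (fun y => rexp (-‖y - x₀‖ ^ 2)) t x ^ 2) (Metric.ball (0:Efin n) r) := by
      have hi : Integrable (fun x : Efin n =>
          (1 + 4 * t) ^ (-(n:ℝ)) * rexp (-(2 / (1 + 4 * t) * ‖x - x₀‖ ^ 2))) :=
        (integrable_gauss (by positivity) x₀).const_mul _
      exact (hi.congr (Eventually.of_forall fun x => (heatSol_gauss_sq x₀ ht0 x).symm)).integrableOn
    have hptwise : ∀ x ∈ Metric.ball (0:Efin n) r,
        heatSol n (fun y => rexp (-‖y - x₀‖ ^ 2)) t x ^ 2 ≤ rexp (-(2 / (1 + 4 * T) * s ^ 2)) := by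
      intro x hx
      rw [heatSol_gauss_sq x₀ ht0 x]
      have hxr : ‖x‖ < r := by rwa [Metric.mem_ball, dist_zero_right] at hx
      have hsep : s ≤ ‖x - x₀‖ := by
        calc s = R - r := by rw [hR_def]; ring
          _ ≤ ‖x₀‖ - ‖x‖ := by rw [hx₀]; linarith
          _ ≤ ‖x₀ - x‖ := norm_sub_norm_le _ _
          _ = ‖x - x₀‖ := norm_sub_rev _ _
      have hsq : s ^ 2 ≤ ‖x - x₀‖ ^ 2 := by nlinarith
      have hfac : (1 + 4 * t) ^ (-(n:ℝ)) ≤ 1 :=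
        Real.rpow_le_one_of_one_le_of_nonpos (by linarith) (by simp)
      have hexp : rexp (-(2 / (1 + 4 * t) * ‖x - x₀‖ ^ 2)) ≤ rexp (-(2 / (1 + 4 * T) * s ^ 2)) := by
        apply Real.exp_le_exp.2
        rw [neg_le_neg_iff]
        have h2t : 2 / (1 + 4 * T) ≤ 2 / (1 + 4 * t) := by
          apply div_le_div_of_nonneg_left (by norm_num) ht1 (by linarith)
        have h1 : 2 / (1 + 4 * T) * s ^ 2 ≤ 2 / (1 + 4 * t) * s ^ 2 :=
          mul_le_mul_of_nonneg_right h2t (sq_nonneg s)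
        have h2' : 2 / (1 + 4 * t) * s ^ 2 ≤ 2 / (1 + 4 * t) * ‖x - x₀‖ ^ 2 :=
          mul_le_mul_of_nonneg_left hsq (by positivity)
        linarith
      calc (1 + 4 * t) ^ (-(n:ℝ)) * rexp (-(2 / (1 + 4 * t) * ‖x - x₀‖ ^ 2))
          ≤ 1 * rexp (-(2 / (1 + 4 * t) * ‖x - x₀‖ ^ 2)) :=
            mul_le_mul_of_nonneg_right hfac (Real.exp_pos _).le
        _ = rexp (-(2 / (1 + 4 * t) * ‖x - x₀‖ ^ 2)) := one_mul _
        _ ≤ rexp (-(2 / (1 + 4 * T) * s ^ 2)) := hexp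
    calc (∫ x in Metric.ball (0:Efin n) r, heatSol n (fun y => rexp (-‖y - x₀‖ ^ 2)) t x ^ 2)
        ≤ ∫ _x in Metric.ball (0:Efin n) r, rexp (-(2 / (1 + 4 * T) * s ^ 2)) :=
          setIntegral_mono_on hint_t (integrableOn_const measure_ball_lt_top.ne)
            Metric.isOpen_ball.measurableSet hptwise
      _ = Vr * rexp (-(2 / (1 + 4 * T) * s ^ 2)) := by
          rw [setIntegral_const, smul_eq_mul, Measure.real]
  have hinner_nonneg : ∀ t : ℝ,
      0 ≤ ∫ x in Metric.ball (0:Efin n) r, heatSol n (fun y => rexp (-‖y - x₀‖ ^ 2)) t x ^ 2 :=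
    fun t => setIntegral_nonneg Metric.isOpen_ball.measurableSet fun x _ => sq_nonneg _
  have hupper : (∫ t in Set.Ioo (0:ℝ) T,
      ∫ x in Metric.ball (0:Efin n) r, heatSol n (fun y => rexp (-‖y - x₀‖ ^ 2)) t x ^ 2)
        ≤ K₂ * rexp (-(2 / (1 + 4 * T) * s ^ 2)) := by
    have hgc : IntegrableOn (fun _ : ℝ => Vr * rexp (-(2 / (1 + 4 * T) * s ^ 2))) (Set.Ioo (0:ℝ) T) :=
      integrableOn_const (by rw [Real.volume_Ioo]; exact ENNReal.ofReal_lt_top.ne)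
    calc (∫ t in Set.Ioo (0:ℝ) T,
        ∫ x in Metric.ball (0:Efin n) r, heatSol n (fun y => rexp (-‖y - x₀‖ ^ 2)) t x ^ 2)
        ≤ ∫ _t in Set.Ioo (0:ℝ) T, Vr * rexp (-(2 / (1 + 4 * T) * s ^ 2)) :=
          integral_mono_of_nonneg (Eventually.of_forall fun t => hinner_nonneg t) hgc
            ((ae_restrict_iff' measurableSet_Ioo).2 (Eventually.of_forall hinner))
      _ = K₂ * rexp (-(2 / (1 + 4 * T) * s ^ 2)) := by
          rw [setIntegral_const, smul_eq_mul, Measure.real, Real.volume_Ioo,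
            ENNReal.toReal_ofReal (by linarith), hK₂def]
          ring
  -- FINAL contradiction
  have hq : (μ + 1) * s ≤ 2 / (1 + 4 * T) * s ^ 2 := by
    have h2s : (μ + 1) * (1 + 4 * T) ≤ 2 * s := by linarith
    rw [div_mul_eq_mul_div, le_div_iff₀ hT1]
    nlinarith [hs0.le]
  have key1 : s - μ * (r + 1) ≤ 2 / (1 + 4 * T) * s ^ 2 - μ * (R + 1) := by
    rw [hR_def]; nlinarith
  have key3 : C * K₂ / K₁ < rexp (s - μ * (r + 1)) := by
    have h0 : (0:ℝ) ≤ C * K₂ / K₁ := by positivity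
    calc C * K₂ / K₁ < C * K₂ / K₁ + 1 := by linarith
      _ = rexp (Real.log (C * K₂ / K₁ + 1)) := (Real.exp_log (by linarith)).symm
      _ ≤ rexp (s - μ * (r + 1)) := Real.exp_le_exp.2 (by linarith)
  have key4 : C * K₂ < K₁ * rexp (2 / (1 + 4 * T) * s ^ 2 - μ * (R + 1)) := by
    have h1 := (div_lt_iff₀ hK₁).1 key3
    calc C * K₂ < rexp (s - μ * (r + 1)) * K₁ := h1
      _ ≤ rexp (2 / (1 + 4 * T) * s ^ 2 - μ * (R + 1)) * K₁ :=
          mul_le_mul_of_nonneg_right (Real.exp_le_exp.2 key1) hK₁.le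
      _ = K₁ * rexp (2 / (1 + 4 * T) * s ^ 2 - μ * (R + 1)) := mul_comm _ _
  have key5 : C * K₂ * rexp (-(2 / (1 + 4 * T) * s ^ 2)) < K₁ * rexp (-(μ * (R + 1))) := by
    have h1 := mul_lt_mul_of_pos_right key4 (Real.exp_pos (-(2 / (1 + 4 * T) * s ^ 2)))
    have h2 : K₁ * rexp (2 / (1 + 4 * T) * s ^ 2 - μ * (R + 1)) * rexp (-(2 / (1 + 4 * T) * s ^ 2))
        = K₁ * rexp (-(μ * (R + 1))) := by
      rw [mul_assoc, ← Real.exp_add]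
      congr 2
      ring
    linarith
  have hstep := mul_le_mul_of_nonneg_left hupper hC.le
  nlinarith [key5, hlow, hu, hstep]

/-- There is no weighted observability inequality over a ball, for the weights
`ρ(x) = ⟨x⟩^{-ν}` and `ρ(x) = e^{-|x|}`. -/
theorem no_weighted_observability_over_ball (n : ℕ) (hn : 0 < n)
    (ν T r : ℝ) (hν : 0 < ν) (hT : 0 < T) (hr : 0 < r) :
    (¬ ∃ C > (0:ℝ), ∀ u₀ : EuclideanSpace ℝ (Fin n) → ℝ, MemLp u₀ 2 volume →
      ∫ x, heatSol n u₀ T x ^ 2 * Real.sqrt (1 + ‖x‖ ^ 2) ^ (-ν) ≤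
        C * ∫ t in Ioo (0:ℝ) T, ∫ x in Metric.ball 0 r, heatSol n u₀ t x ^ 2) ∧
    (¬ ∃ C > (0:ℝ), ∀ u₀ : EuclideanSpace ℝ (Fin n) → ℝ, MemLp u₀ 2 volume →
      ∫ x, heatSol n u₀ T x ^ 2 * Real.exp (-‖x‖) ≤
        C * ∫ t in Ioo (0:ℝ) T, ∫ x in Metric.ball 0 r, heatSol n u₀ t x ^ 2) := by
  constructor
  · refine core n hn T r ν hT hr hν (fun x => Real.sqrt (1 + ‖x‖ ^ 2) ^ (-ν)) ?_ ?_ ?_ ?_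
    · exact (((continuous_const.add (continuous_norm.pow 2)).sqrt).rpow_const
        (fun x : Efin n => Or.inl (Real.sqrt_pos.2 (by positivity : (0:ℝ) < 1 + ‖x‖ ^ 2)).ne')).measurable
    · exact fun x => Real.rpow_nonneg (Real.sqrt_nonneg _) _
    · intro x
      apply Real.rpow_le_one_of_one_le_of_nonpos ?_ (neg_nonpos.2 hν.le)
      exact (Real.le_sqrt' one_pos).2 (by nlinarith [sq_nonneg ‖x‖])
    · intro x
      have hpos : (0:ℝ) < Real.sqrt (1 + ‖x‖ ^ 2) := Real.sqrt_pos.2 (by positivity)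
      have hb : Real.sqrt (1 + ‖x‖ ^ 2) ≤ rexp ‖x‖ := by
        have h1 : Real.sqrt (1 + ‖x‖ ^ 2) ≤ 1 + ‖x‖ := by
          rw [show (1 + ‖x‖ : ℝ) = Real.sqrt ((1 + ‖x‖) ^ 2) from
            (Real.sqrt_sq (by positivity)).symm]
          exact Real.sqrt_le_sqrt (by nlinarith [norm_nonneg x])
        linarith [Real.add_one_le_exp ‖x‖]
      have h2 := Real.rpow_le_rpow_of_nonpos hpos hb (neg_nonpos.2 hν.le)
      calc rexp (-(ν * ‖x‖)) = rexp ‖x‖ ^ (-ν) := by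
            rw [← Real.exp_mul, show ‖x‖ * -ν = -(ν * ‖x‖) by ring]
        _ ≤ Real.sqrt (1 + ‖x‖ ^ 2) ^ (-ν) := h2
  · refine core n hn T r 1 hT hr one_pos (fun x => rexp (-‖x‖)) ?_ ?_ ?_ ?_
    · exact (Real.continuous_exp.comp continuous_norm.neg).measurable
    · exact fun x => (Real.exp_pos _).le
    · exact fun x => Real.exp_le_one_iff.2 (neg_nonpos.2 (norm_nonneg x))
    · exact fun x => le_of_eq (by rw [one_mul])
end
end
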